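/- Let ρ > 0, ε > 0 and let F(z) = Σ_{k≥1} a_k z^k be a power series with complex coefficients absolutely convergent for |z| < ρ + ε, with a_1 ≠ 0. Set ρ' = |a_1| / (√2 · Σ_{k≥2} k|a_k|ρ^{k-2}). Then for every r < min(ρ, ρ'), F' has no zero on the closed disc of radius r and F is injective on that disc. -/

import Mathlib

open Finset Filter Metric Topology

set_option maxHeartbeats 1000000 in
/-- Explicit Jessen–Wintner injectivity lemma: if `F(z) = Σ_{k≥1} a_k z^k` converges
absolutely for `|z| < ρ + ε`, `a_1 ≠ 0`, and
`ρ' = |a_1| / (√2 Σ_{k≥2} k |a_k| ρ^{k-2})`, then for `r < min(ρ, ρ')` the derivative `F'`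
has no zero on the closed disc of radius `r` and `F` is injective there. -/
theorem injectivity_radius (ρ ε : ℝ) (hρ : 0 < ρ) (hε : 0 < ε)
    (a : ℕ → ℂ) (ha0 : a 0 = 0) (ha1 : a 1 ≠ 0)
    (hconv : ∀ x : ℝ, 0 ≤ x → x < ρ + ε → Summable fun k => ‖a k‖ * x ^ k)
    (F : ℂ → ℂ) (hF : ∀ z : ℂ, ‖z‖ < ρ + ε → HasSum (fun k => a k * z ^ k) (F z))
    (ρ' : ℝ)
    (hρ' : ρ' = ‖a 1‖ / (Real.sqrt 2 * ∑' k : ℕ, ((k : ℝ) + 2) * ‖a (k + 2)‖ * ρ ^ k))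
    (r : ℝ) (hr : r < min ρ ρ') :
    (∀ z ∈ Metric.closedBall (0 : ℂ) r, deriv F z ≠ 0) ∧
    Set.InjOn F (Metric.closedBall (0 : ℂ) r) := by
  rcases lt_or_ge r 0 with hr0 | hr0
  · rw [Metric.closedBall_eq_empty.2 hr0]
    exact ⟨fun z hz => absurd hz (Set.notMem_empty z), Set.injOn_empty F⟩
  -- Notation
  set S : ℝ := ∑' k : ℕ, ((k : ℝ) + 2) * ‖a (k + 2)‖ * ρ ^ k with hS
  have hrρ : r < ρ := lt_of_lt_of_le hr (min_le_left _ _)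
  have hrρ' : r < ρ' := lt_of_lt_of_le hr (min_le_right _ _)
  have hρ'pos : 0 < ρ' := lt_of_le_of_lt hr0 hrρ'
  have hSnonneg : 0 ≤ S := tsum_nonneg fun k => by positivity
  have hSpos : 0 < S := by
    rcases hSnonneg.lt_or_eq with h | h
    · exact h
    · exfalso
      rw [hρ', ← h, mul_zero, div_zero] at hρ'pos
      exact lt_irrefl _ hρ'pos
  -- choose an intermediate radius r₂
  set r₂ : ℝ := (r + min ρ ρ') / 2 with hr₂def
  have hr₂gt : r < r₂ := by simp only [hr₂def]; linarith
  have hr₂lt : r₂ < min ρ ρ' := by simp only [hr₂def]; linarith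
  have hr₂ρ : r₂ ≤ ρ := le_of_lt (lt_of_lt_of_le hr₂lt (min_le_left _ _))
  have hr₂ρ' : r₂ < ρ' := lt_of_lt_of_le hr₂lt (min_le_right _ _)
  have hr₂0 : 0 ≤ r₂ := le_trans hr0 hr₂gt.le
  have hsqrt2 : (1 : ℝ) ≤ Real.sqrt 2 := by
    rw [show (1:ℝ) = Real.sqrt 1 from Real.sqrt_one.symm]
    exact Real.sqrt_le_sqrt (by norm_num)
  -- the key numeric inequality
  have hkey : r₂ * S < ‖a 1‖ := by
    have h1 : r₂ * (Real.sqrt 2 * S) < ‖a 1‖ := by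
      rw [hρ'] at hr₂ρ'
      exact (lt_div_iff₀ (by positivity)).mp hr₂ρ'
    nlinarith [norm_nonneg (a 1)]
  -- summability of the majorant series
  set q : ℝ := ρ + ε / 2 with hq
  have hq0 : 0 < q := by positivity
  have hρq : ρ < q := by simp only [hq]; linarith
  have hqlt : q < ρ + ε := by simp only [hq]; linarith
  have hx1 : ρ / q < 1 := (div_lt_one hq0).mpr hρq
  have hx0 : 0 ≤ ρ / q := by positivity
  have hgeo : Summable (fun n : ℕ => (n : ℝ) * (ρ / q) ^ n) := by
    simpa using summable_pow_mul_geometric_of_norm_lt_one 1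
      (r := ρ / q) (by rw [Real.norm_of_nonneg hx0]; exact hx1)
  set C : ℝ := ∑' n : ℕ, (n : ℝ) * (ρ / q) ^ n with hC
  have hCle : ∀ k : ℕ, ((k : ℝ) + 2) * (ρ / q) ^ (k + 2) ≤ C := by
    intro k
    have h := hgeo.le_tsum (k + 2) (fun m _ => by positivity)
    rw [← hC] at h
    push_cast at h
    exact h
  have haq : Summable (fun k : ℕ => ‖a (k + 2)‖ * q ^ (k + 2)) := by
    have h := hconv q hq0.le hqlt
    exact (summable_nat_add_iff (f := fun n => ‖a n‖ * q ^ n) 2).mpr h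
  have hS_sum : Summable (fun k : ℕ => ((k : ℝ) + 2) * ‖a (k + 2)‖ * ρ ^ k) := by
    refine Summable.of_nonneg_of_le (g := fun k : ℕ => ((k : ℝ) + 2) * ‖a (k + 2)‖ * ρ ^ k)
      (f := fun k : ℕ => C / ρ ^ 2 * (‖a (k + 2)‖ * q ^ (k + 2)))
      (fun k => by positivity) (fun k => ?_) (haq.mul_left _)
    have h1 : ((k : ℝ) + 2) * ρ ^ (k + 2) ≤ C * q ^ (k + 2) := by
      have h := hCle k
      rw [div_pow, ← mul_div_assoc, div_le_iff₀ (by positivity)] at h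
      exact h
    have hρne : (ρ : ℝ) ≠ 0 := ne_of_gt hρ
    calc ((k : ℝ) + 2) * ‖a (k + 2)‖ * ρ ^ k
        = (((k : ℝ) + 2) * ρ ^ (k + 2)) * (‖a (k + 2)‖ / ρ ^ 2) := by
          rw [pow_add]; field_simp
      _ ≤ (C * q ^ (k + 2)) * (‖a (k + 2)‖ / ρ ^ 2) :=
          mul_le_mul_of_nonneg_right h1 (by positivity)
      _ = C / ρ ^ 2 * (‖a (k + 2)‖ * q ^ (k + 2)) := by ring
  -- the main slope estimate on the closed ball of radius r₂
  have key : ∀ z₁ z₂ : ℂ, ‖z₁‖ ≤ r₂ → ‖z₂‖ ≤ r₂ → z₁ ≠ z₂ →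
      ‖(F z₂ - F z₁) / (z₂ - z₁) - a 1‖ ≤ r₂ * S := by
    intro z₁ z₂ hz₁ hz₂ hne
    have hb₁ : ‖z₁‖ < ρ + ε := lt_of_le_of_lt hz₁ (by linarith)
    have hb₂ : ‖z₂‖ < ρ + ε := lt_of_le_of_lt hz₂ (by linarith)
    set g : ℕ → ℂ := fun k => a k * ∑ i ∈ range k, z₂ ^ i * z₁ ^ (k - 1 - i) with hgdef
    have h2 : ∀ k : ℕ, a k * z₂ ^ k - a k * z₁ ^ k = (z₂ - z₁) * g k := by
      intro k
      have hgeom := geom_sum₂_mul z₂ z₁ k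
      simp only [hgdef]
      rw [show a k * z₂ ^ k - a k * z₁ ^ k = a k * (z₂ ^ k - z₁ ^ k) by ring, ← hgeom]
      ring
    have hsum : HasSum (fun k => (z₂ - z₁) * g k) (F z₂ - F z₁) := by
      have h := (hF z₂ hb₂).sub (hF z₁ hb₁)
      simpa only [h2] using h
    have hzne : z₂ - z₁ ≠ 0 := sub_ne_zero.mpr (Ne.symm hne)
    have hg : HasSum g ((F z₂ - F z₁) / (z₂ - z₁)) := by
      have h := hsum.div_const (z₂ - z₁)
      simpa only [mul_div_cancel_left₀ _ hzne] using h
    have hg0 : g 0 = 0 := by simp [hgdef, ha0]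
    have hg1 : g 1 = a 1 := by simp [hgdef]
    have htail : HasSum (fun k => g (k + 2)) ((F z₂ - F z₁) / (z₂ - z₁) - a 1) := by
      have h := (hasSum_nat_add_iff' (f := g) 2).mpr hg
      have hs : ∑ i ∈ range 2, g i = a 1 := by
        rw [Finset.sum_range_succ, Finset.sum_range_one, hg0, hg1, zero_add]
      rwa [hs] at h
    have hbound : ∀ k : ℕ, ‖g (k + 2)‖ ≤ r₂ * (((k : ℝ) + 2) * ‖a (k + 2)‖ * ρ ^ k) := by
      intro k
      have hterm : ∀ i ∈ range (k + 2), ‖z₂ ^ i * z₁ ^ (k + 2 - 1 - i)‖ ≤ r₂ ^ (k + 1) := by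
        intro i hi
        have hik : i ≤ k + 1 := by
          have := Finset.mem_range.mp hi; omega
        have : ‖z₂ ^ i * z₁ ^ (k + 2 - 1 - i)‖ = ‖z₂‖ ^ i * ‖z₁‖ ^ (k + 1 - i) := by
          rw [norm_mul, norm_pow, norm_pow]; norm_num
        rw [this]
        calc ‖z₂‖ ^ i * ‖z₁‖ ^ (k + 1 - i) ≤ r₂ ^ i * r₂ ^ (k + 1 - i) := by
              apply mul_le_mul (pow_le_pow_left₀ (norm_nonneg _) hz₂ i)
                (pow_le_pow_left₀ (norm_nonneg _) hz₁ _) (by positivity) (by positivity)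
          _ = r₂ ^ (k + 1) := by rw [← pow_add, Nat.add_sub_cancel' hik]
      have hsum_le : ‖∑ i ∈ range (k + 2), z₂ ^ i * z₁ ^ (k + 2 - 1 - i)‖
          ≤ ((k : ℝ) + 2) * r₂ ^ (k + 1) := by
        calc ‖∑ i ∈ range (k + 2), z₂ ^ i * z₁ ^ (k + 2 - 1 - i)‖
            ≤ ∑ i ∈ range (k + 2), ‖z₂ ^ i * z₁ ^ (k + 2 - 1 - i)‖ := norm_sum_le _ _
          _ ≤ ∑ _i ∈ range (k + 2), r₂ ^ (k + 1) := Finset.sum_le_sum hterm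
          _ = ((k : ℝ) + 2) * r₂ ^ (k + 1) := by
              rw [Finset.sum_const, Finset.card_range, nsmul_eq_mul]; push_cast; ring
      have hr₂pow : r₂ ^ (k + 1) ≤ r₂ * ρ ^ k := by
        rw [pow_succ']
        exact mul_le_mul_of_nonneg_left (pow_le_pow_left₀ hr₂0 hr₂ρ k) hr₂0
      calc ‖g (k + 2)‖ = ‖a (k + 2)‖ * ‖∑ i ∈ range (k + 2), z₂ ^ i * z₁ ^ (k + 2 - 1 - i)‖ := by
            rw [hgdef]; exact norm_mul _ _
        _ ≤ ‖a (k + 2)‖ * (((k : ℝ) + 2) * r₂ ^ (k + 1)) :=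
            mul_le_mul_of_nonneg_left hsum_le (norm_nonneg _)
        _ ≤ ‖a (k + 2)‖ * (((k : ℝ) + 2) * (r₂ * ρ ^ k)) := by
            apply mul_le_mul_of_nonneg_left _ (norm_nonneg _)
            exact mul_le_mul_of_nonneg_left hr₂pow (by positivity)
        _ = r₂ * (((k : ℝ) + 2) * ‖a (k + 2)‖ * ρ ^ k) := by ring
    have hnorm_sum : Summable (fun k => ‖g (k + 2)‖) :=
      Summable.of_nonneg_of_le (fun _ => norm_nonneg _) hbound (hS_sum.mul_left r₂)
    calc ‖(F z₂ - F z₁) / (z₂ - z₁) - a 1‖ = ‖∑' k, g (k + 2)‖ := by rw [htail.tsum_eq]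
      _ ≤ ∑' k, ‖g (k + 2)‖ := norm_tsum_le_tsum_norm hnorm_sum
      _ ≤ ∑' k : ℕ, r₂ * (((k : ℝ) + 2) * ‖a (k + 2)‖ * ρ ^ k) :=
          Summable.tsum_le_tsum hbound hnorm_sum (hS_sum.mul_left r₂)
      _ = r₂ * S := by rw [tsum_mul_left]
  -- differentiability of F on the ball of radius q via the power series
  set p : FormalMultilinearSeries ℂ ℂ ℂ := FormalMultilinearSeries.ofScalars ℂ a with hp
  have hpnorm : ∀ n, ‖p n‖ = ‖a n‖ := fun n => FormalMultilinearSeries.ofScalars_norm ℂ a n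
  have hfps : HasFPowerSeriesOnBall F p 0 (ENNReal.ofReal q) := by
    constructor
    · -- radius
      have hsummable : Summable (fun n => ‖p n‖ * ((q.toNNReal : ℝ)) ^ n) := by
        have := hconv q hq0.le hqlt
        simpa [hpnorm, Real.coe_toNNReal q hq0.le] using this
      have h := p.le_radius_of_summable_norm hsummable
      show ((q.toNNReal : NNReal) : ENNReal) ≤ p.radius
      exact h
    · exact ENNReal.ofReal_pos.mpr hq0
    · intro y hy
      have hylt : ‖y‖ < q := by
        rw [EMetric.mem_ball, edist_lt_ofReal, dist_zero_right] at hy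
        exact hy
      have := hF y (lt_trans hylt hqlt)
      simp only [zero_add]
      have e : ∀ n, p n (fun _ => y) = a n * y ^ n := fun n => by
        rw [hp, FormalMultilinearSeries.ofScalars_apply_eq, smul_eq_mul]
      simpa only [e] using this
  refine ⟨?_, ?_⟩
  · -- deriv ≠ 0
    intro z hz
    rw [Metric.mem_closedBall, dist_zero_right] at hz
    have hzball : z ∈ EMetric.ball (0 : ℂ) (ENNReal.ofReal q) := by
      show z ∈ Metric.eball (0 : ℂ) (ENNReal.ofReal q)
      rw [EMetric.mem_ball, edist_lt_ofReal, dist_zero_right]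
      exact lt_of_le_of_lt hz (by linarith)
    have hdiff : DifferentiableAt ℂ F z :=
      (hfps.analyticAt_of_mem hzball).differentiableAt
    have htend : Tendsto (slope F z) (𝓝[≠] z) (𝓝 (deriv F z)) :=
      hasDerivAt_iff_tendsto_slope.mp hdiff.hasDerivAt
    have hmem : Metric.closedBall (0 : ℂ) r₂ ∈ 𝓝 z :=
      Metric.closedBall_mem_nhds_of_mem
        (by rw [Metric.mem_ball, dist_zero_right]; exact lt_of_le_of_lt hz hr₂gt)
    have hev : ∀ᶠ y in 𝓝[≠] z, ‖slope F z y - a 1‖ ≤ r₂ * S := by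
      filter_upwards [self_mem_nhdsWithin, mem_nhdsWithin_of_mem_nhds hmem] with y hy1 hy2
      have hyne : y ≠ z := hy1
      rw [Metric.mem_closedBall, dist_zero_right] at hy2
      rw [slope_def_field]
      exact key z y (le_trans hz hr₂gt.le) hy2 (Ne.symm hyne)
    have hle : ‖deriv F z - a 1‖ ≤ r₂ * S :=
      le_of_tendsto ((htend.sub_const (a 1)).norm) hev
    intro hzero
    rw [hzero, zero_sub, norm_neg] at hle
    exact absurd (lt_of_le_of_lt hle hkey) (lt_irrefl _)
  · -- injectivity
    intro z₁ h1 z₂ h2 heq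
    rw [Metric.mem_closedBall, dist_zero_right] at h1 h2
    by_contra hne
    have h := key z₁ z₂ (le_trans h1 hr₂gt.le) (le_trans h2 hr₂gt.le) hne
    rw [heq, sub_self, zero_div, zero_sub, norm_neg] at h
    exact absurd (lt_of_le_of_lt h hkey) (lt_irrefl _)
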